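/- arXiv:2306.12125 — 4 statements merged into one kernel-verified Lean document; each statement's English description precedes it below -/
import Mathlib

section
/- Let p, q, n ≥ 1, ν > 0, let Σ ∈ ℝ^{p×p} be symmetric positive definite, and let x_1,…,x_n ∈ ℝ^q and y_1,…,y_n ∈ ℝ^p be given. Define ℓ : ℝ^{p×q} → ℝ by ℓ(C) = Σ_{i=1}^n log(1 + (y_i − C x_i)ᵀ Σ^{-1} (y_i − C x_i)/ν), which (up to additive and positive multiplicative constants) is the negative log-likelihood in B of the tensor response regression model with known scatter Σ and degrees of freedom ν. Suppose B̂ ∈ ℝ^{p×q} is a local minimum of ℓ, define the weights w_i = (ν+p)/(ν + (y_i − B̂ x_i)ᵀ Σ^{-1} (y_i − B̂ x_i)) for i = 1,…,n, and suppose Σ_{i=1}^n w_i x_i x_iᵀ is invertible. Then B̂ = (Σ_{i=1}^n w_i y_i x_iᵀ)(Σ_{i=1}^n w_i x_i x_iᵀ)^{-1}; that is, the maximum likelihood estimator is the weighted least squares estimator B̂ = 𝕐 W 𝕏ᵀ(𝕏 W 𝕏ᵀ)^{-1} with W = diag(w_1,…,w_n). (Proposition 4 of the paper, in vectorized form.)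 -/
open MeasureTheory Matrix Real Filter

private lemma mul_vecMulVec' {p m q : ℕ} (A : Matrix (Fin p) (Fin m) ℝ)
    (u : Fin m → ℝ) (v : Fin q → ℝ) :
    A * Matrix.vecMulVec u v = Matrix.vecMulVec (A.mulVec u) v := by
  ext k l
  simp [Matrix.mul_apply, Matrix.vecMulVec_apply, Matrix.mulVec, dotProduct,
    Finset.sum_mul, mul_assoc]

private lemma quad_expand {p : ℕ} (A : Matrix (Fin p) (Fin p) ℝ)
    (r h : Fin p → ℝ) (t : ℝ) :
    (r - t • h) ⬝ᵥ A.mulVec (r - t • h)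
      = r ⬝ᵥ A.mulVec r - t * (h ⬝ᵥ A.mulVec r + r ⬝ᵥ A.mulVec h)
        + t ^ 2 * (h ⬝ᵥ A.mulVec h) := by
  simp [Matrix.mulVec_sub, sub_dotProduct, dotProduct_sub, Matrix.mulVec_smul,
    smul_dotProduct, dotProduct_smul, smul_eq_mul]
  ring

/-- Proposition 4, vectorized: a local minimum `B̂` of the (rescaled)
negative t log-likelihood `ℓ(C) = Σ_i log(1 + (y_i − C x_i)ᵀ Σ^{-1} (y_i − C x_i)/ν)`
satisfies the weighted least squares equation
`B̂ = (Σ_i w_i y_i x_iᵀ)(Σ_i w_i x_i x_iᵀ)^{-1}` with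
`w_i = (ν+p)/(ν + (y_i − B̂x_i)ᵀΣ^{-1}(y_i − B̂x_i))`. -/
theorem stmt3 (p q n : ℕ) (hp : 1 ≤ p) (hq : 1 ≤ q) (hn : 1 ≤ n)
    (ν : ℝ) (hν : 0 < ν)
    (S : Matrix (Fin p) (Fin p) ℝ) (hS : S.PosDef)
    (x : Fin n → Fin q → ℝ) (y : Fin n → Fin p → ℝ)
    (Bhat : Matrix (Fin p) (Fin q) ℝ)
    (hmin : IsLocalMin
      (fun C : Matrix (Fin p) (Fin q) ℝ =>
        ∑ i, Real.log (1 + (y i - C.mulVec (x i)) ⬝ᵥ (S⁻¹).mulVec (y i - C.mulVec (x i)) / ν))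
      Bhat)
    (w : Fin n → ℝ)
    (hw : ∀ i, w i = (ν + p) /
      (ν + (y i - Bhat.mulVec (x i)) ⬝ᵥ (S⁻¹).mulVec (y i - Bhat.mulVec (x i))))
    (hinv : IsUnit (∑ i, w i • Matrix.vecMulVec (x i) (x i))) :
    Bhat = (∑ i, w i • Matrix.vecMulVec (y i) (x i)) *
      (∑ i, w i • Matrix.vecMulVec (x i) (x i))⁻¹ := by
  classical
  set A := S⁻¹ with hAdef
  have hAsymm : Aᵀ = A := by simpa [Matrix.IsHermitian] using hS.inv.isHermitian
  set r : Fin n → Fin p → ℝ := fun i => y i - Bhat.mulVec (x i) with hrdef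
  set c : Fin n → ℝ := fun i => r i ⬝ᵥ A.mulVec (r i) with hcdef
  have hcnn : ∀ i, 0 ≤ c i := fun i => by
    simpa using hS.inv.posSemidef.re_dotProduct_nonneg (r i)
  have hden : ∀ i, 0 < ν + c i := fun i => by have := hcnn i; linarith
  have hswap : ∀ (u v : Fin p → ℝ), u ⬝ᵥ A.mulVec v = v ⬝ᵥ A.mulVec u := fun u v => by
    rw [Matrix.dotProduct_mulVec, ← Matrix.mulVec_transpose, hAsymm, dotProduct_comm]
  -- directional derivative vanishes at the local minimum
  have key : ∀ H : Matrix (Fin p) (Fin q) ℝ,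
      ∑ i, (H.mulVec (x i) ⬝ᵥ A.mulVec (r i)) / (ν + c i) = 0 := by
    intro H
    set h : Fin n → Fin p → ℝ := fun i => H.mulVec (x i) with hhdef
    set φ : ℝ → ℝ := fun t => ∑ i, Real.log
      (1 + (c i - t * (h i ⬝ᵥ A.mulVec (r i) + r i ⬝ᵥ A.mulVec (h i))
        + t ^ 2 * (h i ⬝ᵥ A.mulVec (h i))) / ν) with hφdef
    have hcomp : ((fun C : Matrix (Fin p) (Fin q) ℝ =>
        ∑ i, Real.log (1 + (y i - C.mulVec (x i)) ⬝ᵥ A.mulVec (y i - C.mulVec (x i)) / ν))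
          ∘ (fun t : ℝ => Bhat + t • H)) = φ := by
      funext t
      simp only [Function.comp_apply, hφdef]
      refine Finset.sum_congr rfl fun i _ => ?_
      have hres : y i - (Bhat + t • H).mulVec (x i) = r i - t • h i := by
        simp only [Matrix.add_mulVec, Matrix.smul_mulVec, hrdef, hhdef]
        abel
      rw [hres, quad_expand, hcdef]
    have hloc : IsLocalMin φ 0 := by
      rw [← hcomp]
      have hg : Continuous (fun t : ℝ => Bhat + t • H) :=
        continuous_const.add (continuous_id.smul continuous_const)
      have ht : Tendsto (fun t : ℝ => Bhat + t • H) (nhds 0) (nhds Bhat) := by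
        simpa using hg.tendsto 0
      exact IsMinFilter.comp_tendsto
        (show IsMinFilter _ (nhds Bhat) ((fun t : ℝ => Bhat + t • H) 0) by simpa [IsLocalMin] using hmin) ht
    have hder : HasDerivAt φ
        (∑ i, (-(h i ⬝ᵥ A.mulVec (r i) + r i ⬝ᵥ A.mulVec (h i))) / ν / (1 + c i / ν)) 0 := by
      refine HasDerivAt.fun_sum fun i _ => ?_
      set b := h i ⬝ᵥ A.mulVec (r i) + r i ⬝ᵥ A.mulVec (h i)
      set a := h i ⬝ᵥ A.mulVec (h i)
      have hpos : 0 < 1 + c i / ν := by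
        have := div_nonneg (hcnn i) hν.le; linarith
      have h1 : HasDerivAt (fun t : ℝ => c i - t * b + t ^ 2 * a) (-b) 0 := by
        have := ((hasDerivAt_const (0:ℝ) (c i)).fun_sub ((hasDerivAt_id (0:ℝ)).mul_const b)).fun_add
          ((hasDerivAt_pow 2 (0:ℝ)).mul_const a)
        simpa using this
      have h2 : HasDerivAt (fun t : ℝ => 1 + (c i - t * b + t ^ 2 * a) / ν) ((-b) / ν) 0 :=
        (h1.div_const ν).const_add 1
      have h3 := h2.log (by simpa using hpos.ne')
      simpa using h3
    have hzero := hloc.hasDerivAt_eq_zero hder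
    have e1 : ∀ i, (-(h i ⬝ᵥ A.mulVec (r i) + r i ⬝ᵥ A.mulVec (h i))) / ν / (1 + c i / ν)
        = (-2) * ((h i ⬝ᵥ A.mulVec (r i)) / (ν + c i)) := by
      intro i
      rw [hswap (r i) (h i)]
      have hd := (hden i).ne'
      field_simp
      ring
    rw [Finset.sum_congr rfl fun i _ => e1 i, ← Finset.mul_sum] at hzero
    have := mul_eq_zero.mp hzero
    rcases this with h' | h'
    · norm_num at h'
    · exact h'
  -- entrywise: A * N = 0
  set Tx := ∑ i, w i • Matrix.vecMulVec (x i) (x i) with hTx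
  set Ty := ∑ i, w i • Matrix.vecMulVec (y i) (x i) with hTy
  set N := ∑ i, w i • Matrix.vecMulVec (r i) (x i) with hN
  have hAN : A * N = 0 := by
    ext k l
    have hk := key (Matrix.single k l 1)
    have hmv : ∀ i, (Matrix.single k l (1:ℝ)).mulVec (x i) ⬝ᵥ A.mulVec (r i)
        = x i l * (A.mulVec (r i)) k := by
      intro i
      rw [Matrix.single_mulVec]
      simp [dotProduct, Function.update, Finset.sum_ite_eq]
    rw [Finset.sum_congr rfl fun i _ => by rw [hmv i]] at hk
    have hexp : (A * N) k l = ∑ i, w i * ((A.mulVec (r i)) k * x i l) := by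
      rw [hN, Matrix.mul_sum]
      rw [Matrix.sum_apply]
      refine Finset.sum_congr rfl fun i _ => ?_
      rw [Matrix.mul_smul, mul_vecMulVec']
      simp [Matrix.vecMulVec_apply]
    rw [hexp]
    have : ∀ i, w i * ((A.mulVec (r i)) k * x i l)
        = (ν + p) * (x i l * (A.mulVec (r i)) k / (ν + c i)) := by
      intro i
      rw [hw i]
      have hceq : (y i - Bhat.mulVec (x i)) ⬝ᵥ A.mulVec (y i - Bhat.mulVec (x i)) = c i := rfl
      rw [hceq]
      field_simp
    rw [Finset.sum_congr rfl fun i _ => this i, ← Finset.mul_sum, hk, mul_zero]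
    rfl
  have hNzero : N = 0 := by
    have hSA : S * A = 1 := Matrix.mul_nonsing_inv S ((Matrix.isUnit_iff_isUnit_det S).mp hS.isUnit)
    calc N = (S * A) * N := by rw [hSA, Matrix.one_mul]
    _ = S * (A * N) := by rw [Matrix.mul_assoc]
    _ = 0 := by rw [hAN, Matrix.mul_zero]
  have hNsplit : N = Ty - Bhat * Tx := by
    rw [hN, hTy, hTx, Matrix.mul_sum, ← Finset.sum_sub_distrib]
    refine Finset.sum_congr rfl fun i _ => ?_
    rw [Matrix.mul_smul, mul_vecMulVec', ← smul_sub]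
    congr 1
    ext k l
    simp [Matrix.vecMulVec_apply, hrdef, Pi.sub_apply, sub_mul]
  have hTyeq : Ty = Bhat * Tx := by
    have h0 : Ty - Bhat * Tx = 0 := hNsplit ▸ hNzero
    exact sub_eq_zero.mp h0
  rw [hTyeq, Matrix.mul_assoc,
    Matrix.mul_nonsing_inv Tx ((Matrix.isUnit_iff_isUnit_det Tx).mp hinv), Matrix.mul_one]
end

section
/- Fix M ≥ 1, dimensions p_1,…,p_M ≥ 1 with p = ∏_m p_m and p_{−m} = ∏_{j≠m} p_j, q ≥ 1, n ≥ 1, ν > 0, data x_1,…,x_n ∈ ℝ^q and Y_1,…,Y_n : I → ℝ where I = ∏_m {1,…,p_m}, and an arbitrary penalty function P : T → ℝ on the space T of coefficient arrays B : I × {1,…,q} → ℝ. For B ∈ T write r_i(B) : I → ℝ, r_i(B)(u) = Y_i(u) − Σ_{k=1}^q B(u,k) x_i(k). For a tuple Ξ = (Σ_1,…,Σ_M) of symmetric positive definite matrices Σ_m ∈ ℝ^{p_m×p_m}, define the Mahalanobis distances q_i(B,Ξ) = Σ_{u,v∈I} r_i(B)(u) r_i(B)(v) ∏_{m=1}^M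 (Σ_m^{-1})(u_m, v_m) and D(Ξ) = Σ_{m=1}^M p_{−m} log det Σ_m. Define L_n(B,Ξ) = (n/2)D(Ξ) + ((ν+p)/2) Σ_{i=1}^n log(1 + q_i(B,Ξ)/ν) + P(B), and, for an anchor (B',Ξ'), define the weights ω_i' = (ν+p)/(ν + q_i(B',Ξ')) and F_n(B,Ξ | B',Ξ') = (n/2)D(Ξ) + (1/2) Σ_{i=1}^n ω_i' q_i(B,Ξ) + P(B). Then F_n majorizes L_n at the anchor up to an additive constant: for every B ∈ T and every tuple Ξ of symmetric positive definite matrices, L_n(B,Ξ) − L_n(B',Ξ') ≤ F_n(B,Ξ | B',Ξ') − F_n(B',Ξ' | B',Ξ'). (Proposition 5 of the paper: the surrogate function of the MM algorithm majorizes the penalized negative log-likelihood.) -/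
open MeasureTheory Matrix Real Filter Finset

/-- Multi-indices of an `M`-way tensor with mode dimensions `p`. -/
abbrev MultiIndex (M : ℕ) (p : Fin M → ℕ) : Type := (m : Fin M) → Fin (p m)

/-- The tensor Mahalanobis distance `‖E‖²_Ξ`, written entrywise via the
Kronecker-product precision matrix. -/
noncomputable def mahalSq {M : ℕ} {p : Fin M → ℕ}
    (Xi : (m : Fin M) → Matrix (Fin (p m)) (Fin (p m)) ℝ)
    (E : MultiIndex M p → ℝ) : ℝ :=
  ∑ u : MultiIndex M p, ∑ v : MultiIndex M p, E u * E v * ∏ m, (Xi m)⁻¹ (u m) (v m)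

/-- `D(Ξ) = Σ_m p_{−m} log det Σ_m`. -/
noncomputable def logDetTerm {M : ℕ} (p : Fin M → ℕ)
    (Xi : (m : Fin M) → Matrix (Fin (p m)) (Fin (p m)) ℝ) : ℝ :=
  ∑ m, (∏ j ∈ Finset.univ.erase m, (p j : ℝ)) * Real.log (Xi m).det

lemma triple_swap {α β γ : Type*} [Fintype α] [Fintype β] [Fintype γ]
    (f : α → β → γ → ℝ) :
    ∑ u, ∑ v, ∑ κ, f u v κ = ∑ κ, ∑ u, ∑ v, f u v κ := by
  have h1 : ∀ u, ∑ v, ∑ κ, f u v κ = ∑ κ, ∑ v, f u v κ := fun u => Finset.sum_comm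
  simp_rw [h1]
  exact Finset.sum_comm

open scoped MatrixOrder Matrix.Norms.L2Operator in
lemma mahalSq_nonneg {M : ℕ} {p : Fin M → ℕ}
    (Xi : (m : Fin M) → Matrix (Fin (p m)) (Fin (p m)) ℝ)
    (hXi : ∀ m, (Xi m).PosDef) (E : MultiIndex M p → ℝ) :
    0 ≤ mahalSq Xi E := by
  choose S hS using fun m =>
    (CStarAlgebra.nonneg_iff_eq_star_mul_self.mp ((hXi m).inv).posSemidef.nonneg)
  have hA : ∀ m (a b : Fin (p m)), (Xi m)⁻¹ a b = ∑ k, S m k a * S m k b := by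
    intro m a b
    rw [hS m]
    simp [Matrix.mul_apply, Matrix.conjTranspose_apply, mul_comm]
  have key : mahalSq Xi E =
      ∑ κ : MultiIndex M p, (∑ u : MultiIndex M p, E u * ∏ m, S m (κ m) (u m)) ^ 2 := by
    unfold mahalSq
    simp_rw [hA, Finset.prod_univ_sum, Fintype.piFinset_univ, Finset.mul_sum, sq,
      Finset.sum_mul_sum, Finset.prod_mul_distrib]
    rw [triple_swap]
    congr 1; ext κ
    congr 1; ext u
    congr 1; ext v
    ring
  rw [key]
  exact Finset.sum_nonneg fun _ _ => sq_nonneg _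

/-- Proposition 5: the weighted-least-squares surrogate `F_n`
majorizes the penalized negative log-likelihood `L_n` at the anchor, up to an
additive constant: `L_n(B,Ξ) − L_n(B',Ξ') ≤ F_n(B,Ξ|B',Ξ') − F_n(B',Ξ'|B',Ξ')`. -/
theorem stmt4 (M : ℕ) (hM : 1 ≤ M) (p : Fin M → ℕ) (hp : ∀ m, 1 ≤ p m)
    (q n : ℕ) (hq : 1 ≤ q) (hn : 1 ≤ n) (ν : ℝ) (hν : 0 < ν)
    (x : Fin n → Fin q → ℝ) (Y : Fin n → MultiIndex M p → ℝ)
    (P : (MultiIndex M p → Fin q → ℝ) → ℝ)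
    (r : (MultiIndex M p → Fin q → ℝ) → Fin n → MultiIndex M p → ℝ)
    (hr : ∀ B i u, r B i u = Y i u - ∑ k, B u k * x i k)
    -- the anchor (B', Ξ')
    (B' : MultiIndex M p → Fin q → ℝ)
    (Xi' : (m : Fin M) → Matrix (Fin (p m)) (Fin (p m)) ℝ)
    (hXi' : ∀ m, (Xi' m).PosDef)
    -- the anchor weights ω_i'
    (w : Fin n → ℝ)
    (hw : ∀ i, w i = (ν + ∏ m, (p m : ℝ)) / (ν + mahalSq Xi' (r B' i)))
    -- L_n and F_n
    (L F : (MultiIndex M p → Fin q → ℝ) →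
      ((m : Fin M) → Matrix (Fin (p m)) (Fin (p m)) ℝ) → ℝ)
    (hL : ∀ B Xi, L B Xi = (n / 2 : ℝ) * logDetTerm p Xi +
      (ν + ∏ m, (p m : ℝ)) / 2 * ∑ i, Real.log (1 + mahalSq Xi (r B i) / ν) + P B)
    (hF : ∀ B Xi, F B Xi = (n / 2 : ℝ) * logDetTerm p Xi +
      (1 / 2 : ℝ) * ∑ i, w i * mahalSq Xi (r B i) + P B) :
    ∀ (B : MultiIndex M p → Fin q → ℝ)
      (Xi : (m : Fin M) → Matrix (Fin (p m)) (Fin (p m)) ℝ),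
      (∀ m, (Xi m).PosDef) →
      L B Xi - L B' Xi' ≤ F B Xi - F B' Xi' := by
  intro B Xi hXi
  set Pp : ℝ := ∏ m, (p m : ℝ) with hPp
  have hPp0 : 0 ≤ Pp := Finset.prod_nonneg fun m _ => Nat.cast_nonneg _
  have hνP : 0 < ν + Pp := by linarith
  have key : ∀ i : Fin n,
      (ν + Pp) / 2 * Real.log (1 + mahalSq Xi (r B i) / ν)
        - (ν + Pp) / 2 * Real.log (1 + mahalSq Xi' (r B' i) / ν)
      ≤ (1 / 2 : ℝ) * (w i * mahalSq Xi (r B i))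
        - (1 / 2 : ℝ) * (w i * mahalSq Xi' (r B' i)) := by
    intro i
    set a : ℝ := mahalSq Xi (r B i) with ha
    set b : ℝ := mahalSq Xi' (r B' i) with hb
    have ha0 : 0 ≤ a := mahalSq_nonneg _ hXi _
    have hb0 : 0 ≤ b := mahalSq_nonneg _ hXi' _
    have hA : (0:ℝ) < 1 + a / ν := by positivity
    have hB : (0:ℝ) < 1 + b / ν := by positivity
    have hνb : (0:ℝ) < ν + b := by linarith
    have hlog : Real.log (1 + a / ν) - Real.log (1 + b / ν) ≤ (a - b) / (ν + b) := by
      have h1 : Real.log (1 + a / ν) - Real.log (1 + b / ν)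
          = Real.log ((1 + a / ν) / (1 + b / ν)) := (Real.log_div hA.ne' hB.ne').symm
      have h2 := Real.log_le_sub_one_of_pos (div_pos hA hB)
      rw [h1]
      have h3 : (1 + a / ν) / (1 + b / ν) - 1 = (a - b) / (ν + b) := by
        field_simp
        ring
      linarith [h2, h3.le, h3.ge]
    have hwi : w i = (ν + Pp) / (ν + b) := by rw [hw i]
    have h4 : (ν + Pp) / 2 * ((a - b) / (ν + b))
        = (1 / 2 : ℝ) * (w i * a) - (1 / 2 : ℝ) * (w i * b) := by
      rw [hwi]
      field_simp
    have h5 : (ν + Pp) / 2 * (Real.log (1 + a / ν) - Real.log (1 + b / ν))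
        ≤ (ν + Pp) / 2 * ((a - b) / (ν + b)) :=
      mul_le_mul_of_nonneg_left hlog (by positivity)
    linarith [h5]
  have hsum : (ν + Pp) / 2 * (∑ i, Real.log (1 + mahalSq Xi (r B i) / ν))
      - (ν + Pp) / 2 * (∑ i, Real.log (1 + mahalSq Xi' (r B' i) / ν))
      ≤ (1 / 2 : ℝ) * (∑ i, w i * mahalSq Xi (r B i))
        - (1 / 2 : ℝ) * (∑ i, w i * mahalSq Xi' (r B' i)) := by
    simp_rw [Finset.mul_sum, ← Finset.sum_sub_distrib]
    exact Finset.sum_le_sum fun i _ => key i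
  rw [hL, hL, hF, hF]
  linarith [hsum]
end

section
/- Let ν > 2, p ≥ 1, q ≥ 1, let Σ_X ∈ ℝ^{q×q} and Σ ∈ ℝ^{p×p} be symmetric positive definite, and let A be a nonempty subset of {1,…,p}×{1,…,q}. For a symmetric positive definite W ∈ ℝ^{p×p}, let M(W) be the matrix indexed by ({1,…,p}×{1,…,q})² with entries M(W)((j,k),(j',k')) = Σ_X(k,k')·W(j,j'), and let M(W)_A denote its principal submatrix on A×A (which is symmetric positive definite). Define V_T = ((ν+p+2)/(ν+p)) · (M(Σ^{-1})_A)^{-1}, V_N = (ν/(ν−2)) · (M(Σ^{-1})_A)^{-1}, and V_L = (ν/(ν−2)) · (M(I_p)_A)^{-1} M(Σ)_A (M(I_p)_A)^{-1}, where I_p is the p×p identity. Then V_L − V_N is positive semidefinite and V_N − V_T is positive definite; i.e., in the Loewner order, V_L ⪰ V_N ≻ V_T. (Theorem 1, part 5: the asymptotic covariance of the adaptively penalized least squares estimator dominates that of the penalized tensor-normal MLE, which strictly dominates that of the penalized tensor-t MLE.) -/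
open Matrix

/-- The matrix `M(W)` with entries `M(W)((j,k),(j',k')) = Σ_X(k,k')·W(j,j')`
(the Kronecker product `Σ_X ⊗ W` written entrywise). -/
def kronMat {p q : ℕ} (SX : Matrix (Fin q) (Fin q) ℝ)
    (W : Matrix (Fin p) (Fin p) ℝ) : Matrix (Fin p × Fin q) (Fin p × Fin q) ℝ :=
  Matrix.of fun jk jk' => SX jk.2 jk'.2 * W jk.1 jk'.1

/-- The principal submatrix of `M(W)` on `A × A`. -/
def kronSub {p q : ℕ} (SX : Matrix (Fin q) (Fin q) ℝ)
    (W : Matrix (Fin p) (Fin p) ℝ) (A : Finset (Fin p × Fin q)) :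
    Matrix A A ℝ :=
  Matrix.of fun a b => kronMat SX W (a : Fin p × Fin q) (b : Fin p × Fin q)

lemma real_conjT {m n : Type*} (M : Matrix m n ℝ) : Mᴴ = Mᵀ := by
  ext i j; simp [conjTranspose_apply]

lemma kronMat_mul {p q : ℕ} (A C : Matrix (Fin q) (Fin q) ℝ) (B D : Matrix (Fin p) (Fin p) ℝ) :
    kronMat A B * kronMat C D = kronMat (A * C) (B * D) := by
  ext jk jk'
  simp only [kronMat, Matrix.mul_apply, Matrix.of_apply, Fintype.sum_prod_type]
  rw [Finset.sum_mul_sum, Finset.sum_comm]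
  exact Finset.sum_congr rfl fun j'' _ => Finset.sum_congr rfl fun k'' _ => by ring

lemma kronMat_one {p q : ℕ} :
    kronMat (1 : Matrix (Fin q) (Fin q) ℝ) (1 : Matrix (Fin p) (Fin p) ℝ) = 1 := by
  ext jk jk'
  simp only [kronMat, Matrix.of_apply, Matrix.one_apply, Prod.ext_iff]
  by_cases h1 : jk.2 = jk'.2 <;> by_cases h2 : jk.1 = jk'.1 <;> simp [h1, h2]

lemma kronMat_transpose {p q : ℕ} (A : Matrix (Fin q) (Fin q) ℝ) (B : Matrix (Fin p) (Fin p) ℝ) :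
    (kronMat A B)ᵀ = kronMat Aᵀ Bᵀ := by
  ext jk jk'; simp [kronMat]

lemma posSemidef_smul' {n : Type*} [Fintype n] {M : Matrix n n ℝ} (hM : M.PosSemidef)
    {c : ℝ} (hc : 0 ≤ c) : (c • M).PosSemidef := by
  refine Matrix.PosSemidef.of_dotProduct_mulVec_nonneg ?_ fun x => ?_
  · have := hM.1
    unfold Matrix.IsHermitian at *
    rw [conjTranspose_smul, this]
    simp
  · have h := hM.dotProduct_mulVec_nonneg x
    rw [smul_mulVec, dotProduct_smul]
    exact mul_nonneg hc h

lemma posDef_smul' {n : Type*} [Fintype n] {M : Matrix n n ℝ} (hM : M.PosDef)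
    {c : ℝ} (hc : 0 < c) : (c • M).PosDef := by
  refine Matrix.PosDef.of_dotProduct_mulVec_pos ?_ fun x hx => ?_
  · have := hM.1
    unfold Matrix.IsHermitian at *
    rw [conjTranspose_smul, this]
    simp
  · have h := hM.dotProduct_mulVec_pos hx
    rw [smul_mulVec, dotProduct_smul]
    exact mul_pos hc h

lemma posDef_submatrix' {n m : Type*} [Fintype n] [Fintype m] {M : Matrix n n ℝ}
    (hM : M.PosDef) {e : m → n} (he : Function.Injective e) :
    (M.submatrix e e).PosDef := by
  refine Matrix.PosDef.of_dotProduct_mulVec_pos ?_ fun x hx => ?_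
  · rw [Matrix.IsHermitian, conjTranspose_submatrix, hM.1]
  · classical
    set y : n → ℝ := fun i => ∑ a, if e a = i then x a else 0 with hy
    have hdp : ∀ v : n → ℝ, y ⬝ᵥ v = ∑ a, x a * v (e a) := by
      intro v
      simp only [dotProduct, hy, Finset.sum_mul, ite_mul, zero_mul]
      rw [Finset.sum_comm]
      refine Finset.sum_congr rfl fun a _ => ?_
      rw [Finset.sum_ite_eq Finset.univ (e a) (fun i => x a * v i)]
      simp
    have hyne : y ≠ 0 := by
      obtain ⟨a₀, ha₀⟩ := Function.ne_iff.mp hx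
      intro h0
      apply ha₀
      have : y (e a₀) = x a₀ := by
        show (∑ a, if e a = e a₀ then x a else 0) = x a₀
        rw [Finset.sum_eq_single a₀ (fun b _ hb => if_neg fun hc => hb (he hc))
          (fun h => absurd (Finset.mem_univ a₀) h)]
        simp
      rw [h0] at this
      simpa using this.symm
    have hpos := hM.dotProduct_mulVec_pos hyne
    have hstary : star y = y := by ext i; simp
    have hstarx : star x = x := by ext i; simp
    rw [hstary] at hpos
    rw [hstarx]
    have hrow : ∀ a, (M *ᵥ y) (e a) = ∑ b, M (e a) (e b) * x b := by
      intro a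
      calc (M *ᵥ y) (e a) = (fun j => M (e a) j) ⬝ᵥ y := rfl
        _ = y ⬝ᵥ (fun j => M (e a) j) := dotProduct_comm _ _
        _ = ∑ b, x b * M (e a) (e b) := hdp _
        _ = ∑ b, M (e a) (e b) * x b := Finset.sum_congr rfl fun b _ => mul_comm _ _
    have : y ⬝ᵥ M *ᵥ y = x ⬝ᵥ (M.submatrix e e) *ᵥ x := by
      rw [hdp]
      refine Eq.trans (Finset.sum_congr rfl fun a _ => by rw [hrow]) ?_
      simp [dotProduct, mulVec, submatrix_apply]
    rwa [this] at hpos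

lemma kronMat_isUnit {p q : ℕ} {A : Matrix (Fin q) (Fin q) ℝ} {B : Matrix (Fin p) (Fin p) ℝ}
    (hA : IsUnit A) (hB : IsUnit B) : IsUnit (kronMat A B) := by
  have h1 : kronMat A B * kronMat A⁻¹ B⁻¹ = 1 := by
    rw [kronMat_mul, mul_nonsing_inv _ (isUnit_iff_isUnit_det _ |>.mp hA),
      mul_nonsing_inv _ (isUnit_iff_isUnit_det _ |>.mp hB), kronMat_one]
  have h2 : kronMat A⁻¹ B⁻¹ * kronMat A B = 1 := by
    rw [kronMat_mul, nonsing_inv_mul _ (isUnit_iff_isUnit_det _ |>.mp hA),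
      nonsing_inv_mul _ (isUnit_iff_isUnit_det _ |>.mp hB), kronMat_one]
  exact ⟨⟨kronMat A B, kronMat A⁻¹ B⁻¹, h1, h2⟩, rfl⟩

lemma kronMat_inv {p q : ℕ} {A : Matrix (Fin q) (Fin q) ℝ} {B : Matrix (Fin p) (Fin p) ℝ}
    (hA : IsUnit A) (hB : IsUnit B) : (kronMat A B)⁻¹ = kronMat A⁻¹ B⁻¹ := by
  apply inv_eq_right_inv
  rw [kronMat_mul, mul_nonsing_inv _ (isUnit_iff_isUnit_det _ |>.mp hA),
    mul_nonsing_inv _ (isUnit_iff_isUnit_det _ |>.mp hB), kronMat_one]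

lemma posDef_of_isUnit_transpose_mul_self {n : Type*} [Fintype n] [DecidableEq n]
    {N : Matrix n n ℝ} (hN : IsUnit N) : (Nᵀ * N).PosDef := by
  refine Matrix.PosDef.of_dotProduct_mulVec_pos (by rw [Matrix.IsHermitian, real_conjT, transpose_mul, transpose_transpose]) fun x hx => ?_
  have hstarx : star x = x := by ext i; simp
  have hinj : Function.Injective N.mulVec := by
    haveI := hN.invertible
    exact Matrix.mulVec_injective_of_invertible N
  have hNx : N *ᵥ x ≠ 0 := by
    intro h
    exact hx (hinj (by simpa using h))
  rw [hstarx, ← Matrix.mulVec_mulVec, Matrix.dotProduct_mulVec, Matrix.vecMul_transpose]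
  have := Matrix.dotProduct_star_self_pos_iff (v := N *ᵥ x) |>.mpr hNx
  have hs : star (N *ᵥ x) = N *ᵥ x := by ext i; simp
  rwa [hs] at this

open scoped MatrixOrder in
lemma kronMat_posDef {p q : ℕ} {A : Matrix (Fin q) (Fin q) ℝ} {B : Matrix (Fin p) (Fin p) ℝ}
    (hA : A.PosDef) (hB : B.PosDef) : (kronMat A B).PosDef := by
  classical
  set s := CFC.sqrt A with hs
  set t := CFC.sqrt B with ht
  have hss : s * s = A := CFC.sqrt_mul_sqrt_self A hA.posSemidef.nonneg
  have htt : t * t = B := CFC.sqrt_mul_sqrt_self B hB.posSemidef.nonneg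
  have hdet : ∀ {k : ℕ} {M N : Matrix (Fin k) (Fin k) ℝ} (_ : M.PosDef) (_ : N * N = M),
      IsUnit N := by
    intro k M N hM hNN
    have hu : IsUnit (N.det * N.det) := by
      rw [← Matrix.det_mul, hNN]
      exact hM.det_pos.ne'.isUnit
    exact (Matrix.isUnit_iff_isUnit_det _).mpr (isUnit_of_mul_isUnit_left hu)
  have hsu : IsUnit s := hdet hA hss
  have htu : IsUnit t := hdet hB htt
  have hsh : sᵀ = s := by
    have := (CFC.sqrt_nonneg A).posSemidef.1
    rw [Matrix.IsHermitian, real_conjT] at this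
    exact this
  have hth : tᵀ = t := by
    have := (CFC.sqrt_nonneg B).posSemidef.1
    rw [Matrix.IsHermitian, real_conjT] at this
    exact this
  have hkey : kronMat A B = (kronMat s t)ᵀ * kronMat s t := by
    rw [kronMat_transpose, hsh, hth, kronMat_mul, hss, htt]
  rw [hkey]
  exact posDef_of_isUnit_transpose_mul_self (kronMat_isUnit hsu htu)

lemma key {p q : ℕ} {SX : Matrix (Fin q) (Fin q) ℝ} (hSX : SX.PosDef)
    {S : Matrix (Fin p) (Fin p) ℝ} (hS : S.PosDef) (A : Finset (Fin p × Fin q)) :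
    ((kronSub SX 1 A)⁻¹ * kronSub SX S A * (kronSub SX 1 A)⁻¹
      - (kronSub SX S⁻¹ A)⁻¹).PosSemidef := by
  classical
  let e : A → Fin p × Fin q := fun a => ↑a
  have he : Function.Injective e := Subtype.val_injective
  set K := kronMat SX S with hK
  set Ci := kronMat SX⁻¹ S⁻¹ with hCi
  set W := kronMat SX (1 : Matrix (Fin p) (Fin p) ℝ) with hW
  have hKpd : K.PosDef := kronMat_posDef hSX hS
  have hWpd : W.PosDef := kronMat_posDef hSX Matrix.PosDef.one
  have hSXd : IsUnit SX.det := hSX.det_pos.ne'.isUnit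
  have hSd : IsUnit S.det := hS.det_pos.ne'.isUnit
  have hKCi : K * Ci = 1 := by
    rw [hK, hCi, kronMat_mul, mul_nonsing_inv _ hSXd, mul_nonsing_inv _ hSd, kronMat_one]
  have hCiK : Ci * K = 1 := by
    rw [hK, hCi, kronMat_mul, nonsing_inv_mul _ hSXd, nonsing_inv_mul _ hSd, kronMat_one]
  -- the selection matrix
  set P : Matrix (Fin p × Fin q) A ℝ :=
    (1 : Matrix (Fin p × Fin q) (Fin p × Fin q) ℝ).submatrix (Equiv.refl _) e with hP
  have hMP : ∀ {m : Type} (M : Matrix m (Fin p × Fin q) ℝ), M * P = M.submatrix id e := by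
    intro m M
    rw [hP, Matrix.mul_submatrix_one (Equiv.refl _) e M]
    simp
  have hPT : Pᵀ = (1 : Matrix (Fin p × Fin q) (Fin p × Fin q) ℝ).submatrix e (Equiv.refl _) := by
    rw [hP, transpose_submatrix, transpose_one]
  have hPM : ∀ {m : Type} (M : Matrix (Fin p × Fin q) m ℝ), Pᵀ * M = M.submatrix e id := by
    intro m M
    rw [hPT, Matrix.one_submatrix_mul e (Equiv.refl _) M]
    simp
  have hconj : ∀ (M : Matrix (Fin p × Fin q) (Fin p × Fin q) ℝ),
      Pᵀ * M * P = M.submatrix e e := by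
    intro M
    rw [hPM, hMP, Matrix.submatrix_submatrix]
    simp
  -- transposes
  have hSXt : SXᵀ = SX := by have := hSX.1; rwa [Matrix.IsHermitian, real_conjT] at this
  have hSit : (S⁻¹)ᵀ = S⁻¹ := by
    have := hS.1.inv; rwa [Matrix.IsHermitian, real_conjT] at this
  have hSXit : (SX⁻¹)ᵀ = SX⁻¹ := by
    have := hSX.1.inv; rwa [Matrix.IsHermitian, real_conjT] at this
  have hWt : Wᵀ = W := by rw [hW, kronMat_transpose, hSXt, transpose_one]
  have hCit : Ciᵀ = Ci := by rw [hCi, kronMat_transpose, hSXit, hSit]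
  -- the two columns
  set U : Matrix (Fin p × Fin q) A ℝ := Ci * W * P with hU
  have hUt : Uᵀ = Pᵀ * (W * Ci) := by
    rw [hU, transpose_mul, transpose_mul, hWt, hCit]
  set Z := fromCols P U with hZ
  have hZt : Zᵀ * K * Z = fromBlocks (Pᵀ*K*P) (Pᵀ*K*U) (Uᵀ*K*P) (Uᵀ*K*U) := by
    rw [hZ, transpose_fromCols, Matrix.fromRows_mul, fromRows_mul_fromCols]
  -- block computations
  have hKU : K * U = W * P := by
    rw [hU]
    calc K * (Ci * W * P) = (K * Ci) * (W * P) := by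
          simp only [Matrix.mul_assoc]
      _ = W * P := by rw [hKCi, Matrix.one_mul]
  have htr : Pᵀ * K * U = W.submatrix e e := by
    rw [Matrix.mul_assoc, hKU, ← Matrix.mul_assoc, hconj]
  have hbl : Uᵀ * K * P = W.submatrix e e := by
    rw [hUt]
    calc Pᵀ * (W * Ci) * K * P = Pᵀ * (W * (Ci * K)) * P := by
          simp only [Matrix.mul_assoc]
      _ = Pᵀ * W * P := by rw [hCiK, Matrix.mul_one]
      _ = W.submatrix e e := hconj W
  have hWCiW : W * Ci * W = kronMat SX S⁻¹ := by
    rw [hW, hCi, kronMat_mul, kronMat_mul, Matrix.one_mul, mul_nonsing_inv _ hSXd,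
      Matrix.one_mul, Matrix.mul_one]
  have hbr : Uᵀ * K * U = (kronMat SX S⁻¹).submatrix e e := by
    rw [hUt, hU]
    calc Pᵀ * (W * Ci) * K * (Ci * W * P)
        = Pᵀ * (W * ((Ci * K) * Ci) * W) * P := by simp only [Matrix.mul_assoc]
      _ = Pᵀ * (W * Ci * W) * P := by
          rw [hCiK, Matrix.one_mul]
      _ = (kronMat SX S⁻¹).submatrix e e := by rw [hWCiW, hconj]
  have hblock : Zᵀ * K * Z = fromBlocks (K.submatrix e e) (W.submatrix e e)
      (W.submatrix e e) ((kronMat SX S⁻¹).submatrix e e) := by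
    rw [hZt, hconj, htr, hbl, hbr]
  -- positive semidefiniteness of the big block matrix
  have hPSD : (Zᵀ * K * Z).PosSemidef := by
    have := hKpd.posSemidef.conjTranspose_mul_mul_same Z
    rwa [real_conjT] at this
  rw [hblock] at hPSD
  -- Schur complement
  have hDpd : ((kronMat SX S⁻¹).submatrix e e).PosDef :=
    posDef_submatrix' (kronMat_posDef hSX hS.inv) he
  haveI : Invertible ((kronMat SX S⁻¹).submatrix e e) := hDpd.isUnit.invertible
  have hBh : (W.submatrix e e)ᴴ = W.submatrix e e := by
    rw [real_conjT, transpose_submatrix, hWt]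
  have hschur : (K.submatrix e e - (W.submatrix e e) *
      ((kronMat SX S⁻¹).submatrix e e)⁻¹ * (W.submatrix e e)).PosSemidef := by
    have := (Matrix.PosDef.fromBlocks₂₂ (K.submatrix e e) (W.submatrix e e) hDpd).mp
      (by rwa [hBh])
    rwa [hBh] at this
  -- conjugate by B'⁻¹
  set B' := W.submatrix e e with hB'
  set D' := (kronMat SX S⁻¹).submatrix e e with hD'
  have hBpd : B'.PosDef := posDef_submatrix' hWpd he
  have hBdet : IsUnit B'.det := hBpd.det_pos.ne'.isUnit
  have h2 := hschur.mul_mul_conjTranspose_same B'⁻¹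
  have hBih : B'⁻¹ᴴ = B'⁻¹ := by rw [conjTranspose_nonsing_inv, hBh]
  rw [hBih] at h2
  have expand : B'⁻¹ * (K.submatrix e e - B' * D'⁻¹ * B') * B'⁻¹
      = B'⁻¹ * K.submatrix e e * B'⁻¹ - D'⁻¹ := by
    rw [Matrix.mul_sub, Matrix.sub_mul]
    congr 1
    calc B'⁻¹ * (B' * D'⁻¹ * B') * B'⁻¹
        = (B'⁻¹ * B') * D'⁻¹ * (B' * B'⁻¹) := by simp only [Matrix.mul_assoc]
      _ = D'⁻¹ := by
          rw [nonsing_inv_mul _ hBdet, mul_nonsing_inv _ hBdet, Matrix.one_mul, Matrix.mul_one]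
  rw [expand] at h2
  -- identify with kronSub
  have e1 : kronSub SX 1 A = B' := rfl
  have e2 : kronSub SX S A = K.submatrix e e := rfl
  have e3 : kronSub SX S⁻¹ A = D' := rfl
  rw [e1, e2, e3]
  exact h2

/-- Theorem 1, part 5: with `V_T`, `V_N`, `V_L` the asymptotic
covariances of the APT, APN, and APL estimators, one has `V_L ⪰ V_N ≻ V_T` in the
Loewner order. -/
theorem stmt5 (p q : ℕ) (hp : 1 ≤ p) (hq : 1 ≤ q) (ν : ℝ) (hν : 2 < ν)
    (SX : Matrix (Fin q) (Fin q) ℝ) (hSX : SX.PosDef)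
    (S : Matrix (Fin p) (Fin p) ℝ) (hS : S.PosDef)
    (A : Finset (Fin p × Fin q)) (hA : A.Nonempty)
    (VT VN VL : Matrix A A ℝ)
    (hVT : VT = ((ν + p + 2) / (ν + p)) • (kronSub SX S⁻¹ A)⁻¹)
    (hVN : VN = (ν / (ν - 2)) • (kronSub SX S⁻¹ A)⁻¹)
    (hVL : VL = (ν / (ν - 2)) •
      ((kronSub SX (1 : Matrix (Fin p) (Fin p) ℝ) A)⁻¹ * kronSub SX S A *
        (kronSub SX (1 : Matrix (Fin p) (Fin p) ℝ) A)⁻¹)) :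
    (VL - VN).PosSemidef ∧ (VN - VT).PosDef := by
  classical
  have hp0 : (0:ℝ) ≤ (p:ℝ) := Nat.cast_nonneg p
  have hν2 : (0:ℝ) < ν - 2 := by linarith
  have hνp : (0:ℝ) < ν + (p:ℝ) := by linarith
  have hDpd : (kronSub SX S⁻¹ A).PosDef := by
    have : kronSub SX S⁻¹ A
        = (kronMat SX S⁻¹).submatrix (fun a : A => (a : Fin p × Fin q)) (fun a : A => (a : Fin p × Fin q)) := rfl
    rw [this]
    exact posDef_submatrix' (kronMat_posDef hSX hS.inv) Subtype.val_injective
  constructor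
  · rw [hVL, hVN, ← smul_sub]
    exact posSemidef_smul' (key hSX hS A) (by positivity)
  · rw [hVN, hVT, ← sub_smul]
    have hpos : 0 < ν / (ν - 2) - (ν + (p:ℝ) + 2) / (ν + (p:ℝ)) := by
      rw [sub_pos, div_lt_div_iff₀ hνp hν2]
      nlinarith
    exact posDef_smul' hDpd.inv hpos
end

section
/- Fix M ≥ 1, dimensions p_1,…,p_M ≥ 1 with p_{−m} = ∏_{j≠m} p_j, n ≥ 1, positive weights ω_1,…,ω_n > 0, and arrays Y_1,…,Y_n, μ : I → ℝ where I = ∏_m {1,…,p_m}; write E_i = Y_i − μ. For a tuple Ξ = (Σ_1,…,Σ_M) of symmetric positive definite matrices Σ_m ∈ ℝ^{p_m×p_m}, define ‖E‖²_Ξ = Σ_{u,v∈I} E(u)E(v) ∏_{m=1}^M (Σ_m^{-1})(u_m,v_m) and H(Ξ) = Σ_{m=1}^M (n p_{−m}/2) log det Σ_m + (1/2)Σ_{i=1}^n ω_i ‖E_i‖²_Ξ. Suppose Ξ̃ = (Σ̃_1,…,Σ̃_M) minimizes H over the set of all tuples of symmetric positive definite matrices. Then for every m = 1,…,M and all a,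 b ∈ {1,…,p_m}: Σ̃_m(a,b) = (1/(n p_{−m})) Σ_{i=1}^n ω_i · [ Σ_{u,v ∈ J} E_i(u⁽ᵃ⁾) (∏_{j≠m}(Σ̃_j^{-1})(u_j, v_j)) E_i(v⁽ᵇ⁾) ], where J = ∏_{j≠m}{1,…,p_j} and u⁽ᵃ⁾ ∈ I denotes the multi-index with m-th coordinate a and remaining coordinates u. Equivalently, in matrix form, Σ̃_m = (1/(n p_{−m})) Σ_i ω_i (Y_i − μ)_{(m)} (⊗_{j≠m} Σ̃_j^{-1}) (Y_i − μ)_{(m)}ᵀ, i.e., the minimizer satisfies the generalized flip-flop stationary equations. (Lemma 1 of the Supplementary Materials.) -/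
open Matrix Real Finset

/-- Multi-indices over all modes other than `m0`. -/
abbrev OffIndex (M : ℕ) (p : Fin M → ℕ) (m0 : Fin M) : Type :=
  (j : {j : Fin M // j ≠ m0}) → Fin (p j.1)

/-- The full multi-index whose `m0`-th coordinate is `a` and whose remaining
coordinates are given by `i`. -/
def embIdx {M : ℕ} {p : Fin M → ℕ} (m0 : Fin M) (a : Fin (p m0))
    (i : OffIndex M p m0) : MultiIndex M p :=
  fun j => if h : j = m0 then cast (congrArg (fun k => Fin (p k)) h.symm) a else i ⟨j, h⟩

lemma embIdx_same {M : ℕ} {p : Fin M → ℕ} (m0 : Fin M) (a : Fin (p m0))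
    (u : OffIndex M p m0) : embIdx m0 a u m0 = a := by
  unfold embIdx
  rw [dif_pos rfl]
  exact cast_eq _ a

lemma embIdx_ne {M : ℕ} {p : Fin M → ℕ} (m0 : Fin M) (a : Fin (p m0))
    (u : OffIndex M p m0) {j : Fin M} (h : j ≠ m0) : embIdx m0 a u j = u ⟨j, h⟩ := by
  unfold embIdx
  rw [dif_neg h]

def offEquiv {M : ℕ} {p : Fin M → ℕ} (m0 : Fin M) :
    (Fin (p m0) × OffIndex M p m0) ≃ MultiIndex M p where
  toFun x := embIdx m0 x.1 x.2
  invFun u := (u m0, fun j => u j.1)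
  left_inv x := by
    refine Prod.ext ?_ ?_
    · exact embIdx_same m0 x.1 x.2
    · funext j
      exact embIdx_ne m0 x.1 x.2 j.2
  right_inv u := by
    funext j
    by_cases h : j = m0
    · subst h
      exact embIdx_same _ _ _
    · exact embIdx_ne _ _ _ h

lemma prod_split {ι : Type*} [Fintype ι] [DecidableEq ι] (m0 : ι) (f : ι → ℝ) :
    ∏ m, f m = f m0 * ∏ j : {j : ι // j ≠ m0}, f j.1 := by
  rw [← Finset.mul_prod_erase Finset.univ f (Finset.mem_univ m0)]
  congr 1
  rw [Finset.prod_subtype (p := fun j => j ≠ m0) (Finset.univ.erase m0)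
    (fun x => by simp [Finset.mem_erase]) f]

lemma mahalSq_update {M : ℕ} {p : Fin M → ℕ} (m0 : Fin M)
    (St : (m : Fin M) → Matrix (Fin (p m)) (Fin (p m)) ℝ)
    (X : Matrix (Fin (p m0)) (Fin (p m0)) ℝ) (E : MultiIndex M p → ℝ) :
    mahalSq (Function.update St m0 X) E =
      ∑ a : Fin (p m0), ∑ b : Fin (p m0), X⁻¹ a b *
        ∑ u : OffIndex M p m0, ∑ v : OffIndex M p m0,
          E (embIdx m0 a u) * (∏ j : {j : Fin M // j ≠ m0}, (St j.1)⁻¹ (u j) (v j)) *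
            E (embIdx m0 b v) := by
  have hprod : ∀ (a b : Fin (p m0)) (u v : OffIndex M p m0),
      (∏ m, (Function.update St m0 X m)⁻¹ (embIdx m0 a u m) (embIdx m0 b v m))
      = X⁻¹ a b * ∏ j : {j : Fin M // j ≠ m0}, (St j.1)⁻¹ (u j) (v j) := by
    intro a b u v
    rw [prod_split m0]
    congr 1
    · rw [embIdx_same, embIdx_same, Function.update_self]
    · refine Finset.prod_congr rfl fun j _ => ?_
      rw [embIdx_ne m0 a u j.2, embIdx_ne m0 b v j.2, Function.update_of_ne j.2]
  unfold mahalSq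
  rw [← Equiv.sum_comp (offEquiv m0) fun uu => ∑ v : MultiIndex M p,
    E uu * E v * ∏ m, (Function.update St m0 X m)⁻¹ (uu m) (v m)]
  rw [Fintype.sum_prod_type]
  simp only [offEquiv, Equiv.coe_fn_mk]
  refine Finset.sum_congr rfl fun a _ => ?_
  calc ∑ u : OffIndex M p m0, ∑ y : MultiIndex M p, E (embIdx m0 a u) * E y *
          ∏ m, (Function.update St m0 X m)⁻¹ (embIdx m0 a u m) (y m)
      = ∑ u : OffIndex M p m0, ∑ b : Fin (p m0), ∑ v : OffIndex M p m0,
          E (embIdx m0 a u) * E (embIdx m0 b v) *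
            (X⁻¹ a b * ∏ j : {j : Fin M // j ≠ m0}, (St j.1)⁻¹ (u j) (v j)) := by
        refine Finset.sum_congr rfl fun u _ => ?_
        rw [← Equiv.sum_comp (offEquiv m0) (fun y => E (embIdx m0 a u) * E y *
          ∏ m, (Function.update St m0 X m)⁻¹ (embIdx m0 a u m) (y m)), Fintype.sum_prod_type]
        simp only [offEquiv, Equiv.coe_fn_mk]
        refine Finset.sum_congr rfl fun b _ => Finset.sum_congr rfl fun v _ => ?_
        rw [hprod]
    _ = ∑ b : Fin (p m0), X⁻¹ a b * ∑ u : OffIndex M p m0, ∑ v : OffIndex M p m0,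
          (E (embIdx m0 a u) * ∏ j : {j : Fin M // j ≠ m0}, (St j.1)⁻¹ (u j) (v j)) *
            E (embIdx m0 b v) := by
        rw [Finset.sum_comm]
        refine Finset.sum_congr rfl fun b _ => ?_
        rw [Finset.mul_sum]
        refine Finset.sum_congr rfl fun u _ => ?_
        rw [Finset.mul_sum]
        refine Finset.sum_congr rfl fun v _ => ?_
        ring

lemma keyA {q : ℕ} (c : ℝ) (hc : 0 < c) (A S : Matrix (Fin q) (Fin q) ℝ)
    (hA : A.PosDef) (hS : S.IsHermitian)
    (hmin : ∀ X : Matrix (Fin q) (Fin q) ℝ, X.PosDef →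
      c * Real.log A.det + (A⁻¹ * S).trace ≤ c * Real.log X.det + (X⁻¹ * S).trace) :
    S.PosDef := by
  by_contra hSne
  have hstar : ∀ y : Fin q → ℝ, star y = y := fun y => funext fun i => star_trivial _
  obtain ⟨x, hx0, hxS⟩ : ∃ x : Fin q → ℝ, x ≠ 0 ∧ x ⬝ᵥ S *ᵥ x ≤ 0 := by
    rw [Matrix.posDef_iff_dotProduct_mulVec] at hSne
    push_neg at hSne
    obtain ⟨x, hx0, hle⟩ := hSne hS
    refine ⟨x, hx0, ?_⟩
    rw [← hstar x]; exact hle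
  have hxx : 0 < x ⬝ᵥ x := by
    have := Matrix.dotProduct_star_self_pos_iff.mpr hx0
    rwa [hstar x] at this
  obtain ⟨v, hvv, hvSv⟩ : ∃ v : Fin q → ℝ, v ⬝ᵥ v = 1 ∧ v ⬝ᵥ S *ᵥ v ≤ 0 := by
    have hsq : Real.sqrt (x ⬝ᵥ x) * Real.sqrt (x ⬝ᵥ x) = x ⬝ᵥ x :=
      Real.mul_self_sqrt hxx.le
    have hsqpos : 0 < Real.sqrt (x ⬝ᵥ x) := Real.sqrt_pos.mpr hxx
    refine ⟨(Real.sqrt (x ⬝ᵥ x))⁻¹ • x, ?_, ?_⟩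
    · rw [smul_dotProduct, dotProduct_smul, smul_eq_mul, smul_eq_mul]
      field_simp
      rw [Real.sq_sqrt hxx.le]
    · rw [smul_dotProduct, Matrix.mulVec_smul, dotProduct_smul, smul_eq_mul, smul_eq_mul]
      have h0 : 0 ≤ (Real.sqrt (x ⬝ᵥ x))⁻¹ := (inv_pos.mpr hsqpos).le
      exact mul_nonpos_of_nonneg_of_nonpos h0 (mul_nonpos_of_nonneg_of_nonpos h0 hxS)
  set P : Matrix (Fin q) (Fin q) ℝ := Matrix.vecMulVec v v with hPdef
  have hPapp : ∀ i j, P i j = v i * v j := fun i j => rfl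
  have hPP : P * P = P := by
    ext i j
    rw [Matrix.mul_apply]
    have : ∀ k, P i k * P k j = v i * v j * (v k * v k) := by
      intro k; rw [hPapp, hPapp]; ring
    rw [Finset.sum_congr rfl fun k _ => this k, ← Finset.mul_sum]
    have : ∑ k, v k * v k = v ⬝ᵥ v := rfl
    rw [this, hvv, mul_one, hPapp]
  have hPH : Pᴴ = P := by
    ext i j
    rw [Matrix.conjTranspose_apply, hPapp, hPapp, star_trivial]
    ring
  have hPmulVec : ∀ y : Fin q → ℝ, P *ᵥ y = (v ⬝ᵥ y) • v := by
    intro y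
    funext i
    rw [Matrix.mulVec, dotProduct]
    rw [Finset.sum_congr rfl (fun k _ => show P i k * y k = v i * (v k * y k) by
      rw [hPapp]; ring), ← Finset.mul_sum]
    show v i * (v ⬝ᵥ y) = ((v ⬝ᵥ y) • v) i
    rw [Pi.smul_apply, smul_eq_mul]
    ring
  -- the family of perturbations
  have hCS : ∀ y : Fin q → ℝ, (v ⬝ᵥ y) * (v ⬝ᵥ y) ≤ y ⬝ᵥ y := by
    intro y
    have := Finset.sum_mul_sq_le_sq_mul_sq Finset.univ v y
    have h1 : (∑ i, v i * y i) = v ⬝ᵥ y := rfl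
    have h2 : (∑ i, v i ^ 2) = v ⬝ᵥ v := by
      apply Finset.sum_congr rfl; intro i _; rw [sq]
    have h3 : (∑ i, y i ^ 2) = y ⬝ᵥ y := by
      apply Finset.sum_congr rfl; intro i _; rw [sq]
    rw [h1, h2, h3, hvv, one_mul] at this
    calc (v ⬝ᵥ y) * (v ⬝ᵥ y) = (v ⬝ᵥ y) ^ 2 := by ring
      _ ≤ y ⬝ᵥ y := this
  have hXpos : ∀ t : ℝ, 0 < t → (1 + (t - 1) • P).PosDef := by
    intro t ht
    rw [Matrix.posDef_iff_dotProduct_mulVec]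
    constructor
    · show (1 + (t - 1) • P)ᴴ = _
      rw [Matrix.conjTranspose_add, Matrix.conjTranspose_smul, Matrix.conjTranspose_one, hPH]
      simp
    · intro y hy
      rw [hstar y, Matrix.add_mulVec, Matrix.one_mulVec, Matrix.smul_mulVec,
        hPmulVec y, dotProduct_add]
      simp only [dotProduct_smul, smul_eq_mul]
      have hyy : 0 < y ⬝ᵥ y := by
        have := Matrix.dotProduct_star_self_pos_iff.mpr hy
        rwa [hstar y] at this
      have hcs := hCS y
      have hcomm : y ⬝ᵥ v = v ⬝ᵥ y := dotProduct_comm y v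
      rw [hcomm]
      rcases le_or_gt 1 t with h1 | h1
      · nlinarith [mul_self_nonneg (v ⬝ᵥ y)]
      · have h2 : (t - 1) * (y ⬝ᵥ y) ≤ (t - 1) * (v ⬝ᵥ y * v ⬝ᵥ y) :=
          mul_le_mul_of_nonpos_left hcs (by linarith)
        nlinarith [mul_pos ht hyy]
  have hXinv : ∀ t : ℝ, 0 < t → (1 + (t - 1) • P)⁻¹ = 1 + (t⁻¹ - 1) • P := by
    intro t ht
    apply Matrix.inv_eq_right_inv
    rw [Matrix.add_mul, Matrix.mul_add, Matrix.mul_add, Matrix.one_mul, Matrix.one_mul,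
      Matrix.mul_one, Matrix.smul_mul, Matrix.mul_smul, smul_smul, hPP]
    have : (1 : Matrix (Fin q) (Fin q) ℝ) + ((t⁻¹ - 1) • P + ((t - 1) • P + ((t - 1) * (t⁻¹ - 1)) • P))
        = 1 + ((t⁻¹ - 1) + (t - 1) + (t - 1) * (t⁻¹ - 1)) • P := by
      rw [add_smul, add_smul]
      abel
    rw [add_assoc, this]
    have hz : (t⁻¹ - 1) + (t - 1) + (t - 1) * (t⁻¹ - 1) = 0 := by
      field_simp
      ring
    rw [hz, zero_smul, add_zero]
  have hXdet : ∀ t : ℝ, (1 + (t - 1) • P).det = t := by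
    intro t
    have h1 : (t - 1) • P = Matrix.replicateCol Unit ((t - 1) • v) * Matrix.replicateRow Unit v := by
      rw [← Matrix.vecMulVec_eq]
      ext i j
      rw [Matrix.smul_apply, hPapp, Matrix.vecMulVec_apply, Pi.smul_apply]
      simp [smul_eq_mul]; ring
    rw [h1, Matrix.det_one_add_replicateCol_mul_replicateRow, dotProduct_smul, smul_eq_mul, hvv]
    ring
  have htrace : ∀ t : ℝ, (((1 + (t⁻¹ - 1) • P)) * S).trace
      = S.trace + (t⁻¹ - 1) * (v ⬝ᵥ S *ᵥ v) := by
    intro t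
    rw [Matrix.add_mul, Matrix.one_mul, Matrix.smul_mul, Matrix.trace_add, Matrix.trace_smul,
      smul_eq_mul]
    have hPS : (P * S).trace = v ⬝ᵥ S *ᵥ v := by
      have expand : (P * S).trace = ∑ i, ∑ k, v i * v k * S k i := by
        rw [Matrix.trace]
        apply Finset.sum_congr rfl
        intro i _
        rw [Matrix.diag_apply, Matrix.mul_apply]
        exact Finset.sum_congr rfl fun k _ => by rw [hPapp]
      have expand2 : v ⬝ᵥ S *ᵥ v = ∑ k, ∑ i, v k * v i * S k i := by
        rw [dotProduct]
        apply Finset.sum_congr rfl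
        intro k _
        rw [Matrix.mulVec, dotProduct, Finset.mul_sum]
        exact Finset.sum_congr rfl fun i _ => by ring
      rw [expand, Finset.sum_comm, expand2]
      exact Finset.sum_congr rfl fun k _ => Finset.sum_congr rfl fun i _ => by ring
    rw [hPS]
  -- derive the contradiction
  set L : ℝ := c * Real.log A.det + (A⁻¹ * S).trace with hLdef
  set t : ℝ := min 1 (Real.exp ((L - S.trace - 1) / c)) with htdef
  have ht : 0 < t := lt_min one_pos (Real.exp_pos _)
  have ht1 : t ≤ 1 := min_le_left _ _
  have hlogt : Real.log t ≤ (L - S.trace - 1) / c := by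
    calc Real.log t ≤ Real.log (Real.exp ((L - S.trace - 1) / c)) :=
          Real.log_le_log ht (min_le_right _ _)
      _ = (L - S.trace - 1) / c := Real.log_exp _
  have hneg : (t⁻¹ - 1) * (v ⬝ᵥ S *ᵥ v) ≤ 0 := by
    apply mul_nonpos_of_nonneg_of_nonpos _ hvSv
    have : 1 ≤ t⁻¹ := (one_le_inv₀ ht).mpr ht1
    linarith
  have hkey := hmin (1 + (t - 1) • P) (hXpos t ht)
  rw [hXinv t ht, hXdet t, htrace t] at hkey
  have hfin : L ≤ L - 1 := by
    calc L ≤ c * Real.log t + (S.trace + (t⁻¹ - 1) * (v ⬝ᵥ S *ᵥ v)) := hkey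
      _ ≤ c * ((L - S.trace - 1) / c) + S.trace := by
          have := mul_le_mul_of_nonneg_left hlogt hc.le
          linarith
      _ = L - 1 := by rw [mul_comm, div_mul_cancel₀ _ hc.ne']; ring
  linarith

lemma trace_hermitian_eq_sum_eigenvalues {q : ℕ} {N : Matrix (Fin q) (Fin q) ℝ}
    (hN : N.IsHermitian) : N.trace = ∑ i, hN.eigenvalues i := by
  conv_lhs => rw [hN.spectral_theorem, Unitary.conjStarAlgAut_apply]
  rw [Matrix.trace_mul_cycle]
  have hU : (star (hN.eigenvectorUnitary : Matrix (Fin q) (Fin q) ℝ)) *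
      (hN.eigenvectorUnitary : Matrix (Fin q) (Fin q) ℝ) = 1 :=
    Matrix.mem_unitaryGroup_iff'.mp hN.eigenvectorUnitary.2
  rw [hU, Matrix.one_mul, Matrix.trace_diagonal]
  simp [RCLike.ofReal_real_eq_id]

open scoped MatrixOrder in
lemma keyB {q : ℕ} (c : ℝ) (hc : 0 < c) (A S : Matrix (Fin q) (Fin q) ℝ)
    (hA : A.PosDef) (hS : S.PosDef)
    (hmin : ∀ X : Matrix (Fin q) (Fin q) ℝ, X.PosDef →
      c * Real.log A.det + (A⁻¹ * S).trace ≤ c * Real.log X.det + (X⁻¹ * S).trace) :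
    S = c • A := by
  set B : Matrix (Fin q) (Fin q) ℝ := c⁻¹ • S with hBdef
  have hSB : S = c • B := by
    rw [hBdef, smul_smul, mul_inv_cancel₀ hc.ne', one_smul]
  have hB : B.PosDef := by
    rw [Matrix.posDef_iff_dotProduct_mulVec]
    constructor
    · show Bᴴ = B
      rw [hBdef, Matrix.conjTranspose_smul, hS.isHermitian.eq]
      simp
    · intro x hx
      show 0 < star x ⬝ᵥ B *ᵥ x
      rw [hBdef, smul_mulVec, dotProduct_smul, smul_eq_mul]
      exact mul_pos (inv_pos.mpr hc) (hS.dotProduct_mulVec_pos hx)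
  have hSdet : IsUnit S.det := hS.det_pos.ne'.isUnit
  have hBinv : B⁻¹ = c • S⁻¹ := by
    apply Matrix.inv_eq_right_inv
    rw [hBdef, Matrix.smul_mul, Matrix.mul_smul, smul_smul, inv_mul_cancel₀ hc.ne',
      one_smul, Matrix.mul_nonsing_inv _ hSdet]
  have htrB : (B⁻¹ * S).trace = c * q := by
    rw [hBinv, Matrix.smul_mul, Matrix.trace_smul, Matrix.nonsing_inv_mul _ hSdet,
      Matrix.trace_one]
    simp [mul_comm]
  -- square root of B
  obtain ⟨R, hRps, hRR⟩ : ∃ R : Matrix (Fin q) (Fin q) ℝ, R.PosSemidef ∧ R * R = B :=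
    ⟨CFC.sqrt B, (CFC.sqrt_nonneg B).posSemidef, CFC.sqrt_mul_sqrt_self B hB.posSemidef.nonneg⟩
  have hRH : Rᴴ = R := hRps.1
  have hRdet : R.det ≠ 0 := by
    intro h
    have : B.det = 0 := by rw [← hRR, Matrix.det_mul, h, mul_zero]
    exact hB.det_pos.ne' this
  have hRunit : IsUnit R.det := hRdet.isUnit
  set N : Matrix (Fin q) (Fin q) ℝ := R * A⁻¹ * R with hNdef
  have hN : N.PosDef := by
    rw [Matrix.posDef_iff_dotProduct_mulVec]
    refine ⟨?_, fun x hx => ?_⟩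
    · have := (hA.inv.posSemidef.mul_mul_conjTranspose_same R).1
      rw [hNdef]
      rwa [hRH] at this
    · have hRx : R *ᵥ x ≠ 0 := by
        intro h
        refine hx (Matrix.mulVec_injective_iff_isUnit.mpr
          ((Matrix.isUnit_iff_isUnit_det R).mpr hRunit) ?_)
        simpa using h
      have := hA.inv.dotProduct_mulVec_pos hRx
      rw [star_mulVec, hRH, Matrix.dotProduct_mulVec] at this
      show 0 < star x ⬝ᵥ N *ᵥ x
      rw [hNdef, ← Matrix.mulVec_mulVec, ← Matrix.mulVec_mulVec, Matrix.dotProduct_mulVec,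
        Matrix.dotProduct_mulVec]
      exact this
  have hdetN : N.det = B.det * A.det⁻¹ := by
    rw [hNdef, Matrix.det_mul, Matrix.det_mul, Matrix.det_nonsing_inv, ← hRR,
      Matrix.det_mul, Ring.inverse_eq_inv']
    ring
  have htrN : N.trace = (A⁻¹ * B).trace := by
    rw [hNdef, Matrix.trace_mul_cycle, hRR, Matrix.trace_mul_comm]
  have htrAS : (A⁻¹ * S).trace = c * N.trace := by
    rw [htrN, hSB, Matrix.mul_smul, Matrix.trace_smul]
    simp
  -- eigenvalues of N
  have hevpos : ∀ i, 0 < hN.isHermitian.eigenvalues i := hN.eigenvalues_pos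
  have hdetNprod : N.det = ∏ i, hN.isHermitian.eigenvalues i := by
    have := hN.isHermitian.det_eq_prod_eigenvalues
    simpa using this
  have htrNs : N.trace = ∑ i, hN.isHermitian.eigenvalues i :=
    trace_hermitian_eq_sum_eigenvalues hN.isHermitian
  -- the main inequality at X = B
  have hineq := hmin B hB
  rw [htrB, htrAS] at hineq
  -- log det N = log det B - log det A
  have hlogN : Real.log N.det = Real.log B.det - Real.log A.det := by
    rw [hdetN, Real.log_mul (hB.det_pos.ne') (inv_ne_zero hA.det_pos.ne'), Real.log_inv]
    ring
  have hsum : ∑ i, (hN.isHermitian.eigenvalues i - Real.log (hN.isHermitian.eigenvalues i) - 1)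
      ≤ 0 := by
    have hlogsum : Real.log N.det = ∑ i, Real.log (hN.isHermitian.eigenvalues i) := by
      rw [hdetNprod]
      exact Real.log_prod fun i _ => (hevpos i).ne'
    have hcard : ((Finset.univ : Finset (Fin q)).card : ℝ) = q := by simp
    have expand : ∑ i, (hN.isHermitian.eigenvalues i
        - Real.log (hN.isHermitian.eigenvalues i) - 1)
        = N.trace - Real.log N.det - q := by
      rw [hlogsum, htrNs]
      rw [Finset.sum_sub_distrib, Finset.sum_sub_distrib]
      simp
    rw [expand, hlogN]
    nlinarith [hineq]
  have hall1 : ∀ i, hN.isHermitian.eigenvalues i = 1 := by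
    intro i
    by_contra hne
    have hstrict : 0 < hN.isHermitian.eigenvalues i
        - Real.log (hN.isHermitian.eigenvalues i) - 1 := by
      have := Real.log_lt_sub_one_of_pos (hevpos i) hne
      linarith
    have hnonneg : ∀ j ∈ Finset.univ, (0:ℝ) ≤ hN.isHermitian.eigenvalues j
        - Real.log (hN.isHermitian.eigenvalues j) - 1 := by
      intro j _
      have := Real.log_le_sub_one_of_pos (hevpos j)
      linarith
    have hpos : 0 < ∑ j, (hN.isHermitian.eigenvalues j
        - Real.log (hN.isHermitian.eigenvalues j) - 1) := by
      refine Finset.sum_pos' (fun j _ => ?_) ⟨i, Finset.mem_univ i, ?_⟩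
      · have := Real.log_le_sub_one_of_pos (hevpos j)
        linarith
      · have := Real.log_lt_sub_one_of_pos (hevpos i) hne
        linarith
    linarith
  -- N = 1
  have hNone : N = 1 := by
    have hspec := hN.isHermitian.spectral_theorem
    have hdiag : Matrix.diagonal (RCLike.ofReal ∘ hN.isHermitian.eigenvalues)
        = (1 : Matrix (Fin q) (Fin q) ℝ) := by
      have : (RCLike.ofReal ∘ hN.isHermitian.eigenvalues : Fin q → ℝ) = fun _ => 1 := by
        funext i
        simp [hall1 i, RCLike.ofReal_real_eq_id]
      rw [this, ← Matrix.diagonal_one]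
    rw [hspec, hdiag, map_one]
  -- conclude A = B
  have hAB : A = B := by
    have h1 : R * A⁻¹ * R = 1 := hNone
    have hAdet : IsUnit A.det := hA.det_pos.ne'.isUnit
    have h4 : R * A⁻¹ = R⁻¹ := by
      have h5 : (R * A⁻¹ * R) * R⁻¹ = R⁻¹ := by rw [h1, Matrix.one_mul]
      rw [Matrix.mul_assoc] at h5
      rwa [Matrix.mul_nonsing_inv _ hRunit, Matrix.mul_one] at h5
    have h3 : R * R * A⁻¹ = 1 := by
      rw [Matrix.mul_assoc, h4, Matrix.mul_nonsing_inv _ hRunit]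
    rw [← Matrix.nonsing_inv_nonsing_inv A hAdet, Matrix.inv_eq_left_inv h3, hRR]
  rw [hSB, hAB]

/-- Lemma 1 of the Supplementary Materials: a minimizer of the
weighted-least-squares objective `H(Ξ)` over tuples of symmetric positive definite
matrices satisfies the generalized flip-flop stationary equations. -/
theorem stmt14 (M : ℕ) (hM : 1 ≤ M) (p : Fin M → ℕ) (hp : ∀ m, 1 ≤ p m)
    (n : ℕ) (hn : 1 ≤ n) (w : Fin n → ℝ) (hw : ∀ i, 0 < w i)
    (Y : Fin n → MultiIndex M p → ℝ) (μ : MultiIndex M p → ℝ)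
    (H : ((m : Fin M) → Matrix (Fin (p m)) (Fin (p m)) ℝ) → ℝ)
    (hH : ∀ Xi, H Xi =
      (∑ m, (n : ℝ) * (∏ j ∈ Finset.univ.erase m, (p j : ℝ)) / 2 * Real.log (Xi m).det) +
        (1 / 2 : ℝ) * ∑ i, w i * mahalSq Xi (fun u => Y i u - μ u))
    (St : (m : Fin M) → Matrix (Fin (p m)) (Fin (p m)) ℝ)
    (hStpos : ∀ m, (St m).PosDef)
    (hStmin : ∀ Xi : (m : Fin M) → Matrix (Fin (p m)) (Fin (p m)) ℝ,
      (∀ m, (Xi m).PosDef) → H St ≤ H Xi) :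
    ∀ (m0 : Fin M) (a b : Fin (p m0)),
      St m0 a b = (1 / ((n : ℝ) * ∏ j ∈ Finset.univ.erase m0, (p j : ℝ))) *
        ∑ i, w i *
          ∑ u : OffIndex M p m0, ∑ v : OffIndex M p m0,
            (Y i (embIdx m0 a u) - μ (embIdx m0 a u)) *
              (∏ j : {j : Fin M // j ≠ m0}, (St j.1)⁻¹ (u j) (v j)) *
              (Y i (embIdx m0 b v) - μ (embIdx m0 b v)) := by
  intro m0 a b
  set c : ℝ := (n : ℝ) * ∏ j ∈ Finset.univ.erase m0, (p j : ℝ) with hcdef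
  have hc : 0 < c := by
    apply mul_pos
    · exact_mod_cast Nat.lt_of_lt_of_le Nat.zero_lt_one hn
    · exact Finset.prod_pos fun j _ => by exact_mod_cast Nat.lt_of_lt_of_le Nat.zero_lt_one (hp j)
  set S : Matrix (Fin (p m0)) (Fin (p m0)) ℝ := Matrix.of fun a b =>
    ∑ i, w i * ∑ u : OffIndex M p m0, ∑ v : OffIndex M p m0,
      (Y i (embIdx m0 a u) - μ (embIdx m0 a u)) *
        (∏ j : {j : Fin M // j ≠ m0}, (St j.1)⁻¹ (u j) (v j)) *
        (Y i (embIdx m0 b v) - μ (embIdx m0 b v)) with hSdef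
  have hSapp : ∀ a b, S a b = ∑ i, w i * ∑ u : OffIndex M p m0, ∑ v : OffIndex M p m0,
      (Y i (embIdx m0 a u) - μ (embIdx m0 a u)) *
        (∏ j : {j : Fin M // j ≠ m0}, (St j.1)⁻¹ (u j) (v j)) *
        (Y i (embIdx m0 b v) - μ (embIdx m0 b v)) := fun a b => rfl
  have hinvsym : ∀ (m : Fin M) (x y : Fin (p m)), (St m)⁻¹ x y = (St m)⁻¹ y x := by
    intro m x y
    have h := (hStpos m).inv.isHermitian
    conv_lhs => rw [← h]
    rw [Matrix.conjTranspose_apply, star_trivial]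
  have hKsym : ∀ u v : OffIndex M p m0,
      (∏ j : {j : Fin M // j ≠ m0}, (St j.1)⁻¹ (u j) (v j))
        = ∏ j : {j : Fin M // j ≠ m0}, (St j.1)⁻¹ (v j) (u j) :=
    fun u v => Finset.prod_congr rfl fun j _ => hinvsym j.1 (u j) (v j)
  have hsym : ∀ a b, S a b = S b a := by
    intro a b
    rw [hSapp, hSapp]
    refine Finset.sum_congr rfl fun i _ => ?_
    congr 1
    rw [Finset.sum_comm]
    refine Finset.sum_congr rfl fun u _ => Finset.sum_congr rfl fun v _ => ?_
    rw [hKsym u v]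
    ring
  have hherm : S.IsHermitian := by
    ext a b
    rw [Matrix.conjTranspose_apply, star_trivial, hsym]
  have htr : ∀ X : Matrix (Fin (p m0)) (Fin (p m0)) ℝ,
      (X * S).trace = ∑ a, ∑ b, X a b * S a b := by
    intro X
    rw [Matrix.trace]
    refine Finset.sum_congr rfl fun a _ => ?_
    rw [Matrix.diag_apply, Matrix.mul_apply]
    exact Finset.sum_congr rfl fun b _ => by rw [hsym b a]
  have hmahal : ∀ X : Matrix (Fin (p m0)) (Fin (p m0)) ℝ,
      ∑ i, w i * mahalSq (Function.update St m0 X) (fun u => Y i u - μ u)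
        = ∑ a, ∑ b, X⁻¹ a b * S a b := by
    intro X
    calc ∑ i, w i * mahalSq (Function.update St m0 X) (fun u => Y i u - μ u)
        = ∑ i, ∑ a, ∑ b, w i * (X⁻¹ a b *
            ∑ u : OffIndex M p m0, ∑ v : OffIndex M p m0,
              (Y i (embIdx m0 a u) - μ (embIdx m0 a u)) *
                (∏ j : {j : Fin M // j ≠ m0}, (St j.1)⁻¹ (u j) (v j)) *
                (Y i (embIdx m0 b v) - μ (embIdx m0 b v))) := by
          refine Finset.sum_congr rfl fun i _ => ?_
          rw [mahalSq_update m0 St X, Finset.mul_sum]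
          exact Finset.sum_congr rfl fun a _ => by rw [Finset.mul_sum]
      _ = ∑ a, ∑ b, ∑ i, w i * (X⁻¹ a b *
            ∑ u : OffIndex M p m0, ∑ v : OffIndex M p m0,
              (Y i (embIdx m0 a u) - μ (embIdx m0 a u)) *
                (∏ j : {j : Fin M // j ≠ m0}, (St j.1)⁻¹ (u j) (v j)) *
                (Y i (embIdx m0 b v) - μ (embIdx m0 b v))) := by
          rw [Finset.sum_comm]
          exact Finset.sum_congr rfl fun a _ => Finset.sum_comm
      _ = ∑ a, ∑ b, X⁻¹ a b * S a b := by
          refine Finset.sum_congr rfl fun a _ => Finset.sum_congr rfl fun b _ => ?_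
          rw [hSapp, Finset.mul_sum]
          exact Finset.sum_congr rfl fun i _ => by ring
  have hHdiff : ∀ X : Matrix (Fin (p m0)) (Fin (p m0)) ℝ, X.PosDef →
      c * Real.log (St m0).det + ((St m0)⁻¹ * S).trace
        ≤ c * Real.log X.det + (X⁻¹ * S).trace := by
    intro X hX
    have hXi : ∀ m, (Function.update St m0 X m).PosDef := by
      intro m
      by_cases h : m = m0
      · subst h
        rw [Function.update_self]
        exact hX
      · rw [Function.update_of_ne h]
        exact hStpos m
    have hmin := hStmin (Function.update St m0 X) hXi
    rw [hH, hH] at hmin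
    have hsplit : ∀ Z : (m : Fin M) → Matrix (Fin (p m)) (Fin (p m)) ℝ,
        (∑ m, (n : ℝ) * (∏ j ∈ Finset.univ.erase m, (p j : ℝ)) / 2 * Real.log (Z m).det)
          = (n : ℝ) * (∏ j ∈ Finset.univ.erase m0, (p j : ℝ)) / 2 * Real.log (Z m0).det
            + ∑ m ∈ Finset.univ.erase m0,
                (n : ℝ) * (∏ j ∈ Finset.univ.erase m, (p j : ℝ)) / 2 * Real.log (Z m).det :=
      fun Z => (Finset.add_sum_erase _ _ (Finset.mem_univ m0)).symm
    rw [hsplit, hsplit] at hmin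
    have hrest : ∑ m ∈ Finset.univ.erase m0,
        (n : ℝ) * (∏ j ∈ Finset.univ.erase m, (p j : ℝ)) / 2 *
          Real.log ((Function.update St m0 X m).det)
        = ∑ m ∈ Finset.univ.erase m0,
            (n : ℝ) * (∏ j ∈ Finset.univ.erase m, (p j : ℝ)) / 2 * Real.log ((St m).det) := by
      refine Finset.sum_congr rfl fun m hm => ?_
      rw [Function.update_of_ne (Finset.mem_erase.mp hm).1]
    rw [hrest, Function.update_self] at hmin
    have hmahalX := hmahal X
    have hmahalA := hmahal (St m0)
    rw [Function.update_eq_self m0 St] at hmahalA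
    rw [hmahalX, hmahalA] at hmin
    rw [htr, htr]
    have hc2 : (n : ℝ) * (∏ j ∈ Finset.univ.erase m0, (p j : ℝ)) / 2 = c / 2 := by
      rw [hcdef]
    rw [hc2] at hmin
    linarith [hmin]
  have hSpd : S.PosDef := keyA c hc (St m0) S (hStpos m0) hherm hHdiff
  have hfinal : S = c • St m0 := keyB c hc (St m0) S (hStpos m0) hSpd hHdiff
  have hentry : S a b = c * St m0 a b := by
    rw [hfinal, Matrix.smul_apply, smul_eq_mul]
  have hgoal : (∑ i, w i * ∑ u : OffIndex M p m0, ∑ v : OffIndex M p m0,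
      (Y i (embIdx m0 a u) - μ (embIdx m0 a u)) *
        (∏ j : {j : Fin M // j ≠ m0}, (St j.1)⁻¹ (u j) (v j)) *
        (Y i (embIdx m0 b v) - μ (embIdx m0 b v))) = S a b := rfl
  rw [hgoal, hentry]
  field_simp
end
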